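/- Convolution with an exponentially stable semigroup preserves almost automorphy: Let (T(t))_{t≥0} be an exponentially stable C₀-semigroup on Y with constants M ≥ 1 and α > 0, and let g : ℝ → Y be almost automorphic. Then for every s ∈ ℝ the Bochner integral Λ(s) = ∫_{−∞}^s T(s−t) g(t) dt converges absolutely, and the function Λ : ℝ → Y is almost automorphic. -/

import Mathlib

open Filter Topology MeasureTheory

/-- A continuous function `f : ℝ → Y` is almost automorphic if for every sequence of reals
there is a subsequence `(τ n)` and a function `f̄` such that `f (s + τ n) → f̄ s` and
`f̄ (s - τ n) → f s` pointwise. -/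
def AlmostAutomorphic {Y : Type*} [NormedAddCommGroup Y] (f : ℝ → Y) : Prop :=
  Continuous f ∧
  ∀ s : ℕ → ℝ, ∃ (φ : ℕ → ℕ) (fbar : ℝ → Y), StrictMono φ ∧
    (∀ t : ℝ, Tendsto (fun n => f (t + s (φ n))) atTop (𝓝 (fbar t))) ∧
    (∀ t : ℝ, Tendsto (fun n => fbar (t - s (φ n))) atTop (𝓝 (f t)))

private lemma shiftIic {Y : Type*} [NormedAddCommGroup Y] [NormedSpace ℝ Y]
    (f : ℝ → Y) (s : ℝ) :
    ∫ t in Set.Iic s, f t = ∫ t in Set.Iic (0 : ℝ), f (t + s) := by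
  rw [← integral_indicator measurableSet_Iic, ← integral_indicator measurableSet_Iic,
    ← integral_add_right_eq_self (fun t => (Set.Iic s).indicator f t) s]
  congr 1
  ext t
  by_cases h : t ≤ 0 <;>
    simp [Set.indicator, h, add_le_iff_nonpos_left]

private lemma contOnAux {Y : Type*} [NormedAddCommGroup Y] [NormedSpace ℝ Y]
    (T : ℝ → Y →L[ℝ] Y) (M : ℝ)
    (hTcont : ∀ x : Y, ContinuousOn (fun t => T t x) (Set.Ici (0 : ℝ)))
    (hTM : ∀ t ≥ (0 : ℝ), ‖T t‖ ≤ M)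
    {u : ℝ → Y} (hu : Continuous u) (s : ℝ) :
    ContinuousOn (fun t => T (s - t) (u t)) (Set.Iic s) := by
  intro t0 ht0
  have hmap : Tendsto (fun t => s - t) (𝓝[Set.Iic s] t0) (𝓝[Set.Ici (0:ℝ)] (s - t0)) := by
    apply tendsto_nhdsWithin_of_tendsto_nhds_of_eventually_within
    · exact ((continuous_const.sub continuous_id).tendsto t0).mono_left nhdsWithin_le_nhds
    · filter_upwards [self_mem_nhdsWithin] with t ht
      exact Set.mem_Ici.2 (sub_nonneg.2 (Set.mem_Iic.1 ht))
  have hT2 : Tendsto (fun t => T (s - t) (u t0)) (𝓝[Set.Iic s] t0)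
      (𝓝 (T (s - t0) (u t0))) :=
    Filter.Tendsto.comp
      (hTcont (u t0) (s - t0) (Set.mem_Ici.2 (sub_nonneg.2 (Set.mem_Iic.1 ht0)))) hmap
  have hu2 : Tendsto (fun t => M * ‖u t - u t0‖ + ‖T (s - t) (u t0) - T (s - t0) (u t0)‖)
      (𝓝[Set.Iic s] t0) (𝓝 0) := by
    have h1 : Tendsto (fun t => M * ‖u t - u t0‖) (𝓝[Set.Iic s] t0) (𝓝 (M * ‖u t0 - u t0‖)) :=
      (((hu.tendsto t0).mono_left nhdsWithin_le_nhds).sub tendsto_const_nhds).norm.const_mul M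
    have h2 : Tendsto (fun t => ‖T (s - t) (u t0) - T (s - t0) (u t0)‖) (𝓝[Set.Iic s] t0)
        (𝓝 ‖T (s - t0) (u t0) - T (s - t0) (u t0)‖) :=
      (hT2.sub tendsto_const_nhds).norm
    have := h1.add h2
    simpa using this
  rw [ContinuousWithinAt, tendsto_iff_norm_sub_tendsto_zero]
  refine squeeze_zero' (Eventually.of_forall fun t => norm_nonneg _) ?_ hu2
  filter_upwards [self_mem_nhdsWithin] with t ht
  have key : T (s - t) (u t) - T (s - t0) (u t0)
      = T (s - t) (u t - u t0) + (T (s - t) (u t0) - T (s - t0) (u t0)) := by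
    rw [map_sub]; abel
  calc ‖T (s - t) (u t) - T (s - t0) (u t0)‖
      ≤ ‖T (s - t) (u t - u t0)‖ + ‖T (s - t) (u t0) - T (s - t0) (u t0)‖ := by
        rw [key]; exact norm_add_le _ _
    _ ≤ M * ‖u t - u t0‖ + ‖T (s - t) (u t0) - T (s - t0) (u t0)‖ := by
        gcongr
        calc ‖T (s - t) (u t - u t0)‖ ≤ ‖T (s - t)‖ * ‖u t - u t0‖ :=
              (T (s - t)).le_opNorm _
          _ ≤ M * ‖u t - u t0‖ :=
              mul_le_mul_of_nonneg_right (hTM _ (sub_nonneg.2 ht)) (norm_nonneg _)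

/-- Convolution with an exponentially stable `C₀`-semigroup preserves almost automorphy:
if `‖T t‖ ≤ M e^{-α t}` for `t ≥ 0` and `g` is almost automorphic, then
`Λ s = ∫_{-∞}^s T (s - t) (g t) dt` converges absolutely for every `s` and `Λ` is almost
automorphic. -/
theorem convolution_semigroup_almostAutomorphic
    {Y : Type*} [NormedAddCommGroup Y] [NormedSpace ℝ Y] [CompleteSpace Y]
    (T : ℝ → Y →L[ℝ] Y) (M α : ℝ) (hM : 1 ≤ M) (hα : 0 < α)
    (hT0 : T 0 = ContinuousLinearMap.id ℝ Y)
    (hTadd : ∀ t ≥ (0 : ℝ), ∀ s ≥ (0 : ℝ), T (t + s) = (T t).comp (T s))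
    (hTcont : ∀ x : Y, ContinuousOn (fun t => T t x) (Set.Ici (0 : ℝ)))
    (hTbound : ∀ t ≥ (0 : ℝ), ‖T t‖ ≤ M * Real.exp (-α * t))
    (g : ℝ → Y) (hg : AlmostAutomorphic g) :
    (∀ s : ℝ, IntegrableOn (fun t => T (s - t) (g t)) (Set.Iic s)) ∧
    AlmostAutomorphic (fun s => ∫ t in Set.Iic s, T (s - t) (g t)) := by
  obtain ⟨hgc, hgaa⟩ := hg
  -- `T` is uniformly bounded by `M` on `[0, ∞)`.
  have hTM : ∀ t ≥ (0 : ℝ), ‖T t‖ ≤ M := by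
    intro t ht
    calc ‖T t‖ ≤ M * Real.exp (-α * t) := hTbound t ht
      _ ≤ M * 1 := by
          have h1 : Real.exp (-α * t) ≤ 1 := Real.exp_le_one_iff.2 (by nlinarith)
          have h0 : (0:ℝ) ≤ M := by linarith
          nlinarith
      _ = M := mul_one M
  -- `g` is bounded.
  obtain ⟨C, hC⟩ : ∃ C : ℝ, ∀ t, ‖g t‖ ≤ C := by
    by_contra h
    push_neg at h
    choose u hu using fun n : ℕ => h n
    obtain ⟨φ, gb, hφ, h1, _⟩ := hgaa u
    have hev : ∀ᶠ n in atTop, ‖g (0 + u (φ n))‖ < ‖gb 0‖ + 1 :=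
      (h1 0).norm.eventually_lt_const (lt_add_one _)
    obtain ⟨n, hn1, hn2⟩ := (hev.and (eventually_ge_atTop ⌈‖gb 0‖ + 1⌉₊)).exists
    have h3 : (‖gb 0‖ + 1 : ℝ) ≤ n := le_trans (Nat.le_ceil _) (Nat.cast_le.2 hn2)
    have h4 : (n : ℝ) ≤ φ n := Nat.cast_le.2 (hφ.le_apply)
    have h5 : (φ n : ℝ) < ‖g (u (φ n))‖ := hu (φ n)
    rw [zero_add] at hn1
    linarith
  have hC0 : 0 ≤ C := le_trans (norm_nonneg _) (hC 0)
  -- exponential integrability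
  have hexpint : ∀ s : ℝ, IntegrableOn (fun t : ℝ => Real.exp (α * t)) (Set.Iic s) := by
    intro s
    have h1 : Integrable ((Set.Iic (α * s)).indicator Real.exp) :=
      (integrable_indicator_iff measurableSet_Iic).2 (integrableOn_exp_Iic _)
    have h2 := (integrable_comp_mul_left_iff
      ((Set.Iic (α * s)).indicator Real.exp) hα.ne').2 h1
    rw [← integrable_indicator_iff (μ := volume) measurableSet_Iic]
    refine h2.congr (Eventually.of_forall fun t => ?_)
    by_cases h : t ≤ s
    · simp [Set.indicator, h, (mul_le_mul_iff_right₀ hα).2 h]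
    · have : ¬ α * t ≤ α * s := fun hh => h ((mul_le_mul_iff_right₀ hα).1 hh)
      simp [Set.indicator, h, this]
  -- absolute convergence of the integral
  have hint : ∀ s : ℝ, IntegrableOn (fun t => T (s - t) (g t)) (Set.Iic s) := by
    intro s
    refine Integrable.mono' (((hexpint s).const_mul (M * C * Real.exp (-α * s))))
      ((contOnAux T M hTcont hTM hgc s).aestronglyMeasurable measurableSet_Iic) ?_
    rw [ae_restrict_iff' measurableSet_Iic]
    refine ae_of_all _ fun t ht => ?_
    calc ‖T (s - t) (g t)‖ ≤ ‖T (s - t)‖ * ‖g t‖ := (T (s - t)).le_opNorm _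
      _ ≤ (M * Real.exp (-α * (s - t))) * C := by
          refine mul_le_mul (hTbound _ (sub_nonneg.2 ht)) (hC t) (norm_nonneg _) ?_
          exact le_trans (norm_nonneg _) (hTbound _ (sub_nonneg.2 ht))
      _ = M * C * Real.exp (-α * s) * Real.exp (α * t) := by
          rw [show -α * (s - t) = -α * s + α * t by ring, Real.exp_add]; ring
  refine ⟨hint, ?_⟩
  -- rewrite the convolution in translated form
  have hrepr : ∀ (h : ℝ → Y) (s : ℝ),
      ∫ t in Set.Iic s, T (s - t) (h t) = ∫ t in Set.Iic (0:ℝ), T (-t) (h (t + s)) := by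
    intro h s
    rw [shiftIic (fun t => T (s - t) (h t)) s]
    simp only [show ∀ t : ℝ, s - (t + s) = -t from fun t => by ring]
  have hfun : (fun s => ∫ t in Set.Iic s, T (s - t) (g t))
      = fun s => ∫ t in Set.Iic (0:ℝ), T (-t) (g (t + s)) := funext (hrepr g)
  rw [hfun]
  -- the common dominating function
  set B : ℝ → ℝ := fun t => M * C * Real.exp (α * t) with hB
  have hBint : Integrable B (volume.restrict (Set.Iic (0:ℝ))) :=
    (hexpint 0).const_mul (M * C)
  have key : ∀ (h : ℝ → Y), (∀ r, ‖h r‖ ≤ C) → ∀ (c : ℝ), ∀ t ∈ Set.Iic (0:ℝ),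
      ‖T (-t) (h (t + c))‖ ≤ B t := by
    intro h hh c t ht
    have hnt : (0:ℝ) ≤ -t := neg_nonneg.2 ht
    calc ‖T (-t) (h (t + c))‖ ≤ ‖T (-t)‖ * ‖h (t + c)‖ := (T (-t)).le_opNorm _
      _ ≤ (M * Real.exp (-α * -t)) * C :=
          mul_le_mul (hTbound _ hnt) (hh _) (norm_nonneg _)
            (le_trans (norm_nonneg _) (hTbound _ hnt))
      _ = B t := by rw [hB, show -α * -t = α * t by ring]; ring
  -- measurability of translated integrands
  have hAESMg : ∀ c : ℝ, AEStronglyMeasurable (fun t => T (-t) (g (t + c)))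
      (volume.restrict (Set.Iic (0:ℝ))) := by
    intro c
    have hcomp : Continuous fun t : ℝ => g (t + c) :=
      hgc.comp (continuous_id.add continuous_const)
    have h := (contOnAux T M hTcont hTM hcomp (0:ℝ)).aestronglyMeasurable
      (μ := volume) measurableSet_Iic
    simpa [zero_sub] using h
  constructor
  · -- continuity of the convolution
    rw [continuous_iff_seqContinuous]
    intro x a hx
    refine tendsto_integral_of_dominated_convergence B (fun k => hAESMg (x k)) hBint
      (fun k => ?_) ?_
    · rw [ae_restrict_iff' measurableSet_Iic]
      exact ae_of_all _ fun t ht => key g hC (x k) t ht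
    · refine ae_of_all _ fun t => ?_
      exact ((T (-t)).continuous.tendsto _).comp
        ((hgc.tendsto _).comp (hx.const_add t))
  · -- almost automorphy
    intro sseq
    obtain ⟨φ, gb, hφ, h1, h2⟩ := hgaa sseq
    have hCgb : ∀ r, ‖gb r‖ ≤ C := fun r =>
      le_of_tendsto (h1 r).norm (Eventually.of_forall fun n => hC _)
    have hAESMgb : ∀ c : ℝ, AEStronglyMeasurable (fun t => T (-t) (gb (t + c)))
        (volume.restrict (Set.Iic (0:ℝ))) := by
      intro c
      refine aestronglyMeasurable_of_tendsto_ae atTop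
        (fun n => hAESMg (c + sseq (φ n))) (ae_of_all _ fun t => ?_)
      have := ((T (-t)).continuous.tendsto _).comp (h1 (t + c))
      simpa only [Function.comp_def, add_assoc] using this
    refine ⟨φ, fun s => ∫ t in Set.Iic (0:ℝ), T (-t) (gb (t + s)), hφ, fun s => ?_,
      fun s => ?_⟩
    · refine tendsto_integral_of_dominated_convergence B
        (fun n => hAESMg (s + sseq (φ n))) hBint (fun n => ?_) ?_
      · rw [ae_restrict_iff' measurableSet_Iic]
        exact ae_of_all _ fun t ht => key g hC _ t ht
      · refine ae_of_all _ fun t => ?_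
        have := ((T (-t)).continuous.tendsto _).comp (h1 (t + s))
        simpa only [Function.comp_def, add_assoc] using this
    · refine tendsto_integral_of_dominated_convergence B
        (fun n => hAESMgb (s - sseq (φ n))) hBint (fun n => ?_) ?_
      · rw [ae_restrict_iff' measurableSet_Iic]
        exact ae_of_all _ fun t ht => key gb hCgb _ t ht
      · refine ae_of_all _ fun t => ?_
        have := ((T (-t)).continuous.tendsto _).comp (h2 (t + s))
        simpa only [Function.comp_def, add_sub_assoc] using this
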